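/- Suppose the interaction graph is the undirected ring on V = {1,…,n} with n ≥ 3 (indices mod n, N_i = {i−1, i+1}, so n_i = 2 for every i), and p_i(0) ∈ (0,1) for all i. If the opinion sequence (p_i(k))_{k≥0} of some agent i converges to a limit p* ∈ (0,1), then p* = 1/2; hence every limit of a convergent opinion sequence on the ring belongs to {0, 1/2, 1}. -/

import Mathlib

/-- CODA model on the undirected ring (`n ≥ 3`): any limit of a convergent opinion
sequence which lies in `(0,1)` must equal `1/2`; hence every limit of a convergent
opinion sequence belongs to `{0, 1/2, 1}`. -/
theorem stmt_17
    (n : ℕ) (hn : 3 ≤ n) [NeZero n]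
    (N : Fin n → Finset (Fin n))
    (hring : ∀ i : Fin n, N i = {i - 1, i + 1})
    (p : Fin n → ℕ → ℝ) (q : Fin n → ℕ → ℕ)
    (hq0 : ∀ i k, (p i k < 1 / 2 ∨ (p i k = 1 / 2 ∧ p i (k - 1) < 1 / 2)) → q i k = 0)
    (hq1 : ∀ i k, ¬(p i k < 1 / 2 ∨ (p i k = 1 / 2 ∧ p i (k - 1) < 1 / 2)) → q i k = 1)
    (hupd : ∀ i k, p i (k + 1) =
      p i k + p i k * (1 - p i k) / (N i).card * ∑ j ∈ N i, ((q j k : ℝ) - p i k))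
    (hp0 : ∀ i, p i 0 ∈ Set.Ioo (0 : ℝ) 1) :
    (∀ i : Fin n, ∀ c : ℝ, c ∈ Set.Ioo (0 : ℝ) 1 →
      Filter.Tendsto (fun k => p i k) Filter.atTop (nhds c) → c = 1 / 2) ∧
    (∀ i : Fin n, ∀ c : ℝ,
      Filter.Tendsto (fun k => p i k) Filter.atTop (nhds c) →
      c = 0 ∨ c = 1 / 2 ∨ c = 1) := by
  classical
  have hqval : ∀ j k, q j k = 0 ∨ q j k = 1 := by
    intro j k
    by_cases h : (p j k < 1 / 2 ∨ (p j k = 1 / 2 ∧ p j (k - 1) < 1 / 2))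
    · exact Or.inl (hq0 j k h)
    · exact Or.inr (hq1 j k h)
  have h2ne : (2 : Fin n) ≠ 0 := by
    intro h
    open Fin.NatCast in
    have h2 : ((2 : ℕ) : Fin n) = (2 : Fin n) := by norm_cast
    have := congrArg Fin.val (h2.trans h)
    open Fin.NatCast in
    rw [Fin.val_cast_of_lt (by omega)] at this
    simp at this
  have hne : ∀ i : Fin n, i - 1 ≠ i + 1 := by
    intro i h
    apply h2ne
    have h2 : (i + 1) - (i - 1) = 2 := by open Fin.CommRing in ring
    rw [← h2, h, sub_self]
  have hupd2 : ∀ i k, p i (k + 1) =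
      p i k + p i k * (1 - p i k) / 2 *
        (((q (i - 1) k : ℝ) + (q (i + 1) k : ℝ)) - 2 * p i k) := by
    intro i k
    rw [hupd i k, hring i, Finset.sum_pair (hne i), Finset.card_pair (hne i)]
    push_cast
    ring
  have hbound : ∀ i k, p i k ∈ Set.Ioo (0 : ℝ) 1 := by
    intro i k
    induction k with
    | zero => exact hp0 i
    | succ k ih =>
      obtain ⟨h0, h1⟩ := ih
      rw [hupd2 i k]
      have hS0 : (0 : ℝ) ≤ (q (i - 1) k : ℝ) + (q (i + 1) k : ℝ) := by positivity
      have hS2 : (q (i - 1) k : ℝ) + (q (i + 1) k : ℝ) ≤ 2 := by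
        rcases hqval (i - 1) k with h | h <;> rcases hqval (i + 1) k with h' | h' <;>
          simp [h, h'] <;> norm_num
      constructor <;> nlinarith [mul_pos h0 (by linarith : (0 : ℝ) < 1 - p i k)]
  have part1 : ∀ i : Fin n, ∀ c : ℝ, c ∈ Set.Ioo (0 : ℝ) 1 →
      Filter.Tendsto (fun k => p i k) Filter.atTop (nhds c) → c = 1 / 2 := by
    rintro i c ⟨hc0, hc1⟩ hlim
    set S : ℕ → ℕ := fun k => q (i - 1) k + q (i + 1) k with hSdef
    set g : ℕ → ℝ := fun k => p i k * (1 - p i k) / 2 with hgdef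
    have hgpos : ∀ k, 0 < g k := by
      intro k
      obtain ⟨h0, h1⟩ := hbound i k
      have : 0 < 1 - p i k := by linarith
      positivity
    have hg : Filter.Tendsto g Filter.atTop (nhds (c * (1 - c) / 2)) :=
      (hlim.mul (tendsto_const_nhds.sub hlim)).div_const 2
    have hgne : c * (1 - c) / 2 ≠ 0 := by
      have : 0 < 1 - c := by linarith
      positivity
    have hd : Filter.Tendsto (fun k => p i (k + 1) - p i k) Filter.atTop (nhds 0) := by
      have h1 : Filter.Tendsto (fun k => p i (k + 1)) Filter.atTop (nhds c) :=
        hlim.comp (Filter.tendsto_add_atTop_nat 1)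
      simpa using h1.sub hlim
    have key : ∀ k, (S k : ℝ) = (p i (k + 1) - p i k) / g k + 2 * p i k := by
      intro k
      have hg0 := (hgpos k).ne'
      have h1 : p i (k + 1) - p i k = g k * ((S k : ℝ) - 2 * p i k) := by
        rw [hupd2 i k]
        simp only [hSdef, hgdef]
        push_cast
        ring
      rw [h1, mul_div_cancel_left₀ _ hg0]
      ring
    have hStend : Filter.Tendsto (fun k => (S k : ℝ)) Filter.atTop (nhds (2 * c)) := by
      have h1 : Filter.Tendsto (fun k => (p i (k + 1) - p i k) / g k + 2 * p i k)
          Filter.atTop (nhds (0 / (c * (1 - c) / 2) + 2 * c)) :=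
        (hd.div hg hgne).add (tendsto_const_nhds.mul hlim)
      simpa [key] using h1
    obtain ⟨K, hK⟩ := Metric.tendsto_atTop.mp hStend (1 / 2) (by norm_num)
    have hconst : ∀ k, K ≤ k → S k = S K := by
      intro k hk
      have h1 := hK k hk
      have h2 := hK K le_rfl
      rw [Real.dist_eq] at h1 h2
      have h3 : |(S k : ℝ) - (S K : ℝ)| < 1 := by
        calc |(S k : ℝ) - (S K : ℝ)| ≤ |(S k : ℝ) - 2 * c| + |(S K : ℝ) - 2 * c| := by
              rw [abs_sub_comm ((S K : ℝ)) (2 * c)] at *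
              exact abs_sub_le _ _ _ |>.trans (by rw [abs_sub_comm (2*c)])
          _ < 1 := by linarith
      have h4 := abs_lt.mp h3
      have h5 : (S k : ℝ) < (S K : ℝ) + 1 := by linarith [h4.2]
      have h6 : (S K : ℝ) < (S k : ℝ) + 1 := by linarith [h4.1]
      have h5' : S k < S K + 1 := by exact_mod_cast h5
      have h6' : S K < S k + 1 := by exact_mod_cast h6
      omega
    have hconst' : Filter.Tendsto (fun k => (S k : ℝ)) Filter.atTop (nhds (S K : ℝ)) := by
      apply Filter.Tendsto.congr' _ tendsto_const_nhds
      filter_upwards [Filter.eventually_ge_atTop K] with k hk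
      exact_mod_cast (hconst k hk).symm
    have heq : (2 : ℝ) * c = (S K : ℝ) := tendsto_nhds_unique hStend hconst'
    have hSK2 : S K ≤ 2 := by
      rcases hqval (i - 1) K with h | h <;> rcases hqval (i + 1) K with h' | h' <;>
        simp [hSdef, h, h']
    have hSKpos : 0 < S K := by
      by_contra h
      push_neg at h
      have h0 : S K = 0 := by omega
      rw [h0] at heq
      push_cast at heq
      linarith
    have hSKlt : S K < 2 := by
      by_contra h
      push_neg at h
      have : S K = 2 := le_antisymm hSK2 h
      rw [this] at heq
      push_cast at heq
      linarith
    have : S K = 1 := by omega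
    rw [this] at heq
    push_cast at heq
    linarith
  refine ⟨part1, ?_⟩
  intro i c hlim
  have hc0 : 0 ≤ c :=
    ge_of_tendsto hlim (Filter.Eventually.of_forall fun k => (hbound i k).1.le)
  have hc1 : c ≤ 1 :=
    le_of_tendsto hlim (Filter.Eventually.of_forall fun k => (hbound i k).2.le)
  rcases eq_or_lt_of_le hc0 with h | h
  · exact Or.inl h.symm
  rcases eq_or_lt_of_le hc1 with h' | h'
  · exact Or.inr (Or.inr h')
  exact Or.inr (Or.inl (part1 i c ⟨h, h'⟩ hlim))
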